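/- Let G be an m×n real matrix and S a subspace of n×m real matrices that is quadratically invariant under G (KGK ∈ S for all K ∈ S). Then for every K ∈ S with ‖GK‖ < 1, the matrix h_G(K) = -K(I-GK)⁻¹ = -∑_{j≥0} K(GK)ʲ belongs to S. -/

import Mathlib

open Matrix

attribute [local instance] Matrix.linftyOpNormedAddCommGroup Matrix.linftyOpNormedRing

/-- If `S` is quadratically invariant under `G`, then for every `K ∈ S` with
`‖GK‖ < 1` (operator norm), `h_G(K) = -K(I-GK)⁻¹ ∈ S`. -/
theorem stmt_12 {m n : ℕ} (G : Matrix (Fin m) (Fin n) ℝ)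
    (S : Submodule ℝ (Matrix (Fin n) (Fin m) ℝ))
    (hqi : ∀ K ∈ S, K * G * K ∈ S) :
    ∀ K ∈ S, ‖G * K‖ < 1 → -(K * (1 - G * K)⁻¹) ∈ S := by
  intro K hK hnorm
  -- every K * (G*K)^j ∈ S
  have hmem : ∀ j : ℕ, K * (G * K) ^ j ∈ S := by
    intro j
    induction j with
    | zero => simpa using hK
    | succ j ih =>
      set A := K * (G * K) ^ j with hA
      have h1 : A * G * A ∈ S := hqi A ih
      have h2 : K * G * K ∈ S := hqi K hK
      have h3 : (A + K) * G * (A + K) ∈ S := hqi _ (S.add_mem ih hK)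
      have hAGK : A * G * K = K * (G * K) ^ (j + 1) := by
        rw [hA]; simp only [pow_succ, ← Matrix.mul_assoc]
      have hKGA : K * G * A = K * (G * K) ^ (j + 1) := by
        rw [hA]; simp only [pow_succ', ← Matrix.mul_assoc]
      have hsum : (2 : ℝ) • (K * (G * K) ^ (j + 1))
          = (A + K) * G * (A + K) - A * G * A - K * G * K := by
        simp only [Matrix.add_mul, Matrix.mul_add, hAGK, hKGA, two_smul]
        abel
      have h4 : (2 : ℝ) • (K * (G * K) ^ (j + 1)) ∈ S := by
        rw [hsum]; exact S.sub_mem (S.sub_mem h3 h1) h2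
      have := S.smul_mem (2⁻¹ : ℝ) h4
      rwa [smul_smul, inv_mul_cancel₀ (by norm_num), one_smul] at this
  have hc : CompleteSpace (Matrix (Fin m) (Fin m) ℝ) := inferInstance
  have : HasSummableGeomSeries (Matrix (Fin m) (Fin m) ℝ) :=
    @instHasSummableGeomSeriesOfCompleteSpace _ _ (by exact hc)
  have hsummable : Summable fun j : ℕ => (G * K) ^ j :=
    summable_geometric_of_norm_lt_one hnorm
  have hinv : (1 - G * K)⁻¹ = ∑' j : ℕ, (G * K) ^ j := by
    rw [Matrix.nonsing_inv_eq_ringInverse]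
    exact NormedRing.inverse_one_sub _ hnorm
  let f : Matrix (Fin m) (Fin m) ℝ →ₗ[ℝ] Matrix (Fin n) (Fin m) ℝ :=
    { toFun := fun X => K * X
      map_add' := fun X Y => Matrix.mul_add K X Y
      map_smul' := fun c X => (Matrix.mul_smul K c X) }
  have hfc : Continuous f := f.continuous_of_finiteDimensional
  have htsum : K * (1 - G * K)⁻¹ = ∑' j : ℕ, K * (G * K) ^ j := by
    rw [hinv]
    exact (hsummable.hasSum.map f.toAddMonoidHom hfc).tsum_eq.symm
  have hclosed : IsClosed (S : Set (Matrix (Fin n) (Fin m) ℝ)) :=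
    Submodule.closed_of_finiteDimensional S
  have hmem' : (∑' j : ℕ, K * (G * K) ^ j) ∈ S := by
    have hs : Summable fun j : ℕ => K * (G * K) ^ j :=
      (hsummable.hasSum.map f.toAddMonoidHom hfc).summable
    refine hclosed.mem_of_tendsto hs.hasSum.tendsto_sum_nat ?_
    exact Filter.Eventually.of_forall fun N => S.sum_mem fun i _ => hmem i
  rw [htsum]
  exact S.neg_mem hmem'
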